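/- arXiv:1310.5117 — 2 statements merged into one kernel-verified Lean document; each statement's English description precedes it below -/
import Mathlib

section
/- (Turning point theorem, unstable side λ < 0.) Let φ : ℝ → E be a C^∞ curve and T, Y_1, …, Y_p : ℝ → ℝ be C^∞ functions such that for every λ the point φ(λ) satisfies the first law with temperature T(λ) and potentials Y_i(λ), with T(0) > 0. Suppose λ = 0 is a turning point: φ′(0) ≠ 0 and (M∘φ)′(0) = (X^i∘φ)′(0) = 0 for all i. Suppose σ := (d/dλ)[T′(λ)·(S∘φ)′(λ) + Σ_{i=1}^p Y_i′(λ)·(X^i∘φ)′(λ)] evaluated at λ = 0 satisfies σ < 0. Finally, suppose there exists a continuous map ũ : ℝ → E such that for all λ in a neighborhood of 0, λ·DS_{φ(λ)}(ũ(λ)) = (S∘φ)′(λ) and λ·DX^i_{φ(λ)}(ũ(λ)) = (X^i∘φ)′(λ) for all i. Then there exists ε > 0 such that for all λ ∈ (−ε, 0), the vector û(λ) := φ′(λ) − λ·ũ(λ) satisfies DM_{φ(λ)}(û(λ)) = DS_{φ(λ)}(û(λ)) = DX^i_{φ(λ)}(û(λ)) = 0 for all i, and B_{φ(λ)}(û(λ),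 û(λ)) < 0; in particular φ(λ) is thermodynamically unstable for all λ ∈ (−ε, 0). -/
open Filter Topology

/-- The second Fréchet derivative of `f : E → ℝ` at `φ`, applied to `u`, `v`. -/
noncomputable def D2 {E : Type*} [NormedAddCommGroup E] [NormedSpace ℝ E]
    (f : E → ℝ) (φ u v : E) : ℝ :=
  fderiv ℝ (fderiv ℝ f) φ u v

/-- `φ` satisfies the first law with temperature `T` and potentials `Y i`:
`DM_φ = T·DS_φ + ∑ i, Y i · DX^i_φ` as continuous linear functionals. -/
def FirstLaw {E : Type*} [NormedAddCommGroup E] [NormedSpace ℝ E] {p : ℕ}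
    (M S : E → ℝ) (X : Fin p → E → ℝ) (φ : E) (T : ℝ) (Y : Fin p → ℝ) : Prop :=
  fderiv ℝ M φ = T • fderiv ℝ S φ + ∑ i, Y i • fderiv ℝ (X i) φ

/-- The canonical bilinear form
`B_φ(u,v) = D²M_φ(u,v) − T·D²S_φ(u,v) − ∑ i, Y i·D²X^i_φ(u,v)`. -/
noncomputable def Bform {E : Type*} [NormedAddCommGroup E] [NormedSpace ℝ E] {p : ℕ}
    (M S : E → ℝ) (X : Fin p → E → ℝ) (φ : E) (T : ℝ) (Y : Fin p → ℝ) (u v : E) : ℝ :=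
  D2 M φ u v - T * D2 S φ u v - ∑ i, Y i * D2 (X i) φ u v

section Aux
variable {E : Type*} [NormedAddCommGroup E] [NormedSpace ℝ E] {p : ℕ}

lemma one_le_inf : ((⊤ : ℕ∞) : WithTop ℕ∞) ≠ 0 := by simp
lemma two_le_inf : (2 : WithTop ℕ∞) ≤ ((⊤ : ℕ∞) : WithTop ℕ∞) := by norm_cast
lemma addone_le_inf : ((⊤ : ℕ∞) : WithTop ℕ∞) + 1 ≤ ((⊤ : ℕ∞) : WithTop ℕ∞) := by
  exact_mod_cast le_top

/-- chain rule along the curve -/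
lemma aux_hasDerivAt_comp (f : E → ℝ) (hf : ContDiff ℝ (⊤:ℕ∞) f)
    (φ : ℝ → E) (hφ : ContDiff ℝ (⊤:ℕ∞) φ) (l : ℝ) :
    HasDerivAt (f ∘ φ) (fderiv ℝ f (φ l) (deriv φ l)) l := by
  have h1 : HasFDerivAt f (fderiv ℝ f (φ l)) (φ l) :=
    (hf.differentiable one_le_inf (φ l)).hasFDerivAt
  have h2 : HasDerivAt φ (deriv φ l) l :=
    (hφ.differentiable one_le_inf l).hasDerivAt
  exact h1.comp_hasDerivAt l h2

lemma aux_deriv_comp (f : E → ℝ) (hf : ContDiff ℝ (⊤:ℕ∞) f)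
    (φ : ℝ → E) (hφ : ContDiff ℝ (⊤:ℕ∞) φ) (l : ℝ) :
    deriv (f ∘ φ) l = fderiv ℝ f (φ l) (deriv φ l) :=
  (aux_hasDerivAt_comp f hf φ hφ l).deriv

/-- derivative of `l ↦ Df_{φ l}(v)` -/
lemma aux_hasDerivAt_fderiv (f : E → ℝ) (hf : ContDiff ℝ (⊤:ℕ∞) f)
    (φ : ℝ → E) (hφ : ContDiff ℝ (⊤:ℕ∞) φ) (v : E) (l : ℝ) :
    HasDerivAt (fun t => fderiv ℝ f (φ t) v) (D2 f (φ l) (deriv φ l) v) l := by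
  have h1 : HasFDerivAt (fderiv ℝ f) (fderiv ℝ (fderiv ℝ f) (φ l)) (φ l) :=
    ((hf.fderiv_right addone_le_inf).differentiable one_le_inf (φ l)).hasFDerivAt
  have h2 : HasDerivAt φ (deriv φ l) l :=
    (hφ.differentiable one_le_inf l).hasDerivAt
  have h3 : HasDerivAt (fun t => fderiv ℝ f (φ t))
      (fderiv ℝ (fderiv ℝ f) (φ l) (deriv φ l)) l := h1.comp_hasDerivAt l h2
  exact (ContinuousLinearMap.apply ℝ ℝ v).hasFDerivAt.comp_hasDerivAt l h3

lemma aux_symm (f : E → ℝ) (hf : ContDiff ℝ (⊤:ℕ∞) f) (x u v : E) :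
    D2 f x u v = D2 f x v u :=
  (hf.contDiffAt.isSymmSndFDerivAt (by rw [minSmoothness_of_isRCLikeNormedField]; exact two_le_inf)) u v

lemma D2_sub_left (f : E → ℝ) (x u w v : E) :
    D2 f x (u - w) v = D2 f x u v - D2 f x w v := by simp [D2]

lemma D2_smul_left (f : E → ℝ) (c : ℝ) (x u v : E) :
    D2 f x (c • u) v = c * D2 f x u v := by simp [D2]

lemma firstlaw_apply {M S : E → ℝ} {X : Fin p → E → ℝ} {x : E} {T : ℝ} {Y : Fin p → ℝ}
    (h : FirstLaw M S X x T Y) (v : E) :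
    fderiv ℝ M x v = T * fderiv ℝ S x v + ∑ i, Y i * fderiv ℝ (X i) x v := by
  have := DFunLike.congr_fun h v
  simpa [ContinuousLinearMap.sum_apply, smul_eq_mul] using this

/-- `B_{φ l}(φ'(l), v) = T'(l)·DS(v) + ∑ Y_i'(l)·DX_i(v)` : the differentiated first law. -/
lemma bform_deriv_identity (M S : E → ℝ) (X : Fin p → E → ℝ)
    (hM : ContDiff ℝ (⊤ : ℕ∞) M) (hS : ContDiff ℝ (⊤ : ℕ∞) S)
    (hX : ∀ i, ContDiff ℝ (⊤ : ℕ∞) (X i))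
    (φ : ℝ → E) (hφ : ContDiff ℝ (⊤ : ℕ∞) φ)
    (T : ℝ → ℝ) (Y : Fin p → ℝ → ℝ)
    (hT : ContDiff ℝ (⊤ : ℕ∞) T) (hY : ∀ i, ContDiff ℝ (⊤ : ℕ∞) (Y i))
    (hfl : ∀ l : ℝ, FirstLaw M S X (φ l) (T l) (fun i => Y i l)) (l : ℝ) (v : E) :
    Bform M S X (φ l) (T l) (fun i => Y i l) (deriv φ l) v
      = deriv T l * fderiv ℝ S (φ l) v + ∑ i, deriv (Y i) l * fderiv ℝ (X i) (φ l) v := by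
  have hg := aux_hasDerivAt_fderiv M hM φ hφ v l
  have hs := aux_hasDerivAt_fderiv S hS φ hφ v l
  have hT' : HasDerivAt T (deriv T l) l := (hT.differentiable one_le_inf l).hasDerivAt
  have h1 : HasDerivAt (fun t => T t * fderiv ℝ S (φ t) v)
      (deriv T l * fderiv ℝ S (φ l) v + T l * D2 S (φ l) (deriv φ l) v) l := hT'.mul hs
  have h2 : HasDerivAt (fun t => ∑ i, Y i t * fderiv ℝ (X i) (φ t) v)
      (∑ i, (deriv (Y i) l * fderiv ℝ (X i) (φ l) v + Y i l * D2 (X i) (φ l) (deriv φ l) v)) l :=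
    HasDerivAt.fun_sum fun i _ =>
      ((hY i).differentiable one_le_inf l).hasDerivAt.mul (aux_hasDerivAt_fderiv (X i) (hX i) φ hφ v l)
  have heq : (fun t => fderiv ℝ M (φ t) v)
      = fun t => T t * fderiv ℝ S (φ t) v + ∑ i, Y i t * fderiv ℝ (X i) (φ t) v :=
    funext fun t => firstlaw_apply (hfl t) v
  rw [heq] at hg
  have := hg.unique (h1.add h2)
  rw [Bform, this, Finset.sum_add_distrib]
  ring

end Aux

/-- Turning point theorem, unstable side `λ < 0`: along a smooth family of
first-law (thermodynamic equilibrium) solutions with a turning point at `λ = 0` and `σ < 0`,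
for all sufficiently small `λ < 0` the perturbation `û(λ) = φ′(λ) − λ·ũ(λ)` keeps `M`, `S`
and all `X^i` fixed to first order and has `B < 0`, so `φ(λ)` is thermodynamically unstable. -/
theorem turning_point_theorem_neg
    {E : Type*} [NormedAddCommGroup E] [NormedSpace ℝ E] [CompleteSpace E]
    {p : ℕ} (M S : E → ℝ) (X : Fin p → E → ℝ)
    (hM : ContDiff ℝ (⊤ : ℕ∞) M) (hS : ContDiff ℝ (⊤ : ℕ∞) S)
    (hX : ∀ i, ContDiff ℝ (⊤ : ℕ∞) (X i))
    (φ : ℝ → E) (hφ : ContDiff ℝ (⊤ : ℕ∞) φ)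
    (T : ℝ → ℝ) (Y : Fin p → ℝ → ℝ)
    (hT : ContDiff ℝ (⊤ : ℕ∞) T) (hY : ∀ i, ContDiff ℝ (⊤ : ℕ∞) (Y i))
    (hfl : ∀ l : ℝ, FirstLaw M S X (φ l) (T l) (fun i => Y i l))
    (hT0 : 0 < T 0)
    (hturn : deriv φ 0 ≠ 0)
    (hturnM : deriv (M ∘ φ) 0 = 0) (hturnX : ∀ i, deriv (X i ∘ φ) 0 = 0)
    (hσ : deriv (fun l =>
      deriv T l * deriv (S ∘ φ) l + ∑ i, deriv (Y i) l * deriv (X i ∘ φ) l) 0 < 0)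
    (u' : ℝ → E) (hu'cont : Continuous u')
    (hu' : ∀ᶠ l in 𝓝 (0 : ℝ),
      l * fderiv ℝ S (φ l) (u' l) = deriv (S ∘ φ) l ∧
      ∀ i, l * fderiv ℝ (X i) (φ l) (u' l) = deriv (X i ∘ φ) l) :
    ∃ ε > 0, ∀ l ∈ Set.Ioo (-ε) (0 : ℝ),
      fderiv ℝ M (φ l) (deriv φ l - l • u' l) = 0 ∧
      fderiv ℝ S (φ l) (deriv φ l - l • u' l) = 0 ∧
      (∀ i, fderiv ℝ (X i) (φ l) (deriv φ l - l • u' l) = 0) ∧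
      Bform M S X (φ l) (T l) (fun i => Y i l)
        (deriv φ l - l • u' l) (deriv φ l - l • u' l) < 0 := by
  classical
  set F : ℝ → ℝ := fun l =>
    deriv T l * deriv (S ∘ φ) l + ∑ i, deriv (Y i) l * deriv (X i ∘ φ) l with hFdef
  set σ' : ℝ := deriv F 0 with hσdef
  have hσ' : σ' < 0 := hσ
  -- s'(0) = 0
  have hS'0 : deriv (S ∘ φ) 0 = 0 := by
    have e1 : deriv (M ∘ φ) 0 = fderiv ℝ M (φ 0) (deriv φ 0) := aux_deriv_comp M hM φ hφ 0
    have e2 := firstlaw_apply (hfl 0) (deriv φ 0)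
    rw [← aux_deriv_comp S hS φ hφ 0] at e2
    have e3 : ∀ i, fderiv ℝ (X i) (φ 0) (deriv φ 0) = 0 := fun i => by
      rw [← aux_deriv_comp (X i) (hX i) φ hφ 0]; exact hturnX i
    simp only [e3, mul_zero, Finset.sum_const_zero, add_zero] at e2
    rw [e2, hturnM] at e1
    exact (mul_eq_zero.mp e1.symm).resolve_left (ne_of_gt hT0)
  have hF0 : F 0 = 0 := by
    simp [hFdef, hS'0, hturnX]
  -- F is differentiable
  have hFsmooth : ContDiff ℝ (⊤ : ℕ∞) F := by
    have hdT : ContDiff ℝ (⊤ : ℕ∞) (deriv T) := (contDiff_infty_iff_deriv.mp hT).2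
    have hdS : ContDiff ℝ (⊤ : ℕ∞) (deriv (S ∘ φ)) :=
      (contDiff_infty_iff_deriv.mp (hS.comp hφ)).2
    have hdY : ∀ i, ContDiff ℝ (⊤ : ℕ∞) (deriv (Y i)) := fun i =>
      (contDiff_infty_iff_deriv.mp (hY i)).2
    have hdX : ∀ i, ContDiff ℝ (⊤ : ℕ∞) (deriv (X i ∘ φ)) := fun i =>
      (contDiff_infty_iff_deriv.mp ((hX i).comp hφ)).2
    exact (hdT.mul hdS).add (ContDiff.sum fun i _ => (hdY i).mul (hdX i))
  have hFd : HasDerivAt F σ' 0 := (hFsmooth.differentiable one_le_inf 0).hasDerivAt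
  -- slope estimate
  have hslope : Tendsto (fun l => F l / l) (𝓝[≠] (0:ℝ)) (𝓝 σ') := by
    have := hasDerivAt_iff_tendsto_slope.mp hFd
    refine this.congr' ?_
    filter_upwards [self_mem_nhdsWithin] with l hl
    simp [slope, hF0, inv_mul_eq_div]
  have hev1 : ∀ᶠ l in 𝓝[≠] (0:ℝ), F l / l < σ'/2 :=
    hslope.eventually_lt_const (by linarith)
  -- bound on B(u', u')
  have hD2cont : ∀ f : E → ℝ, ContDiff ℝ (⊤ : ℕ∞) f →
      Continuous fun l => D2 f (φ l) (u' l) (u' l) := by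
    intro f hf
    have c0 : Continuous fun l => fderiv ℝ (fderiv ℝ f) (φ l) :=
      ((hf.fderiv_right addone_le_inf).continuous_fderiv one_le_inf).comp hφ.continuous
    have c1 : Continuous fun l => fderiv ℝ (fderiv ℝ f) (φ l) (u' l) :=
      isBoundedBilinearMap_apply.continuous.comp (c0.prodMk hu'cont)
    exact isBoundedBilinearMap_apply.continuous.comp (c1.prodMk hu'cont)
  set G : ℝ → ℝ := fun l =>
    Bform M S X (φ l) (T l) (fun i => Y i l) (u' l) (u' l) with hGdef
  have hGc : Continuous G := by
    refine (((hD2cont M hM).sub ((hT.continuous).mul (hD2cont S hS))).sub ?_)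
    exact continuous_finset_sum _ fun i _ => ((hY i).continuous).mul (hD2cont (X i) (hX i))
  set C : ℝ := |G 0| + 1 with hCdef
  have hC : 0 < C := by positivity
  have hev2 : ∀ᶠ l in 𝓝 (0:ℝ), |G l| < C :=
    ((continuous_abs.comp hGc).tendsto 0).eventually_lt_const (lt_add_one _)
  have hev3 : ∀ᶠ l in 𝓝 (0:ℝ), |l| < (-σ'/4)/C := by
    have : Tendsto (fun l : ℝ => |l|) (𝓝 0) (𝓝 0) := by
      simpa using continuous_abs.tendsto (0:ℝ)
    exact this.eventually_lt_const (div_pos (by linarith) hC)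
  -- combine in 𝓝[<] 0
  have key : ∀ᶠ l in 𝓝[<] (0:ℝ),
      fderiv ℝ M (φ l) (deriv φ l - l • u' l) = 0 ∧
      fderiv ℝ S (φ l) (deriv φ l - l • u' l) = 0 ∧
      (∀ i, fderiv ℝ (X i) (φ l) (deriv φ l - l • u' l) = 0) ∧
      Bform M S X (φ l) (T l) (fun i => Y i l)
        (deriv φ l - l • u' l) (deriv φ l - l • u' l) < 0 := by
    have hle1 : 𝓝[<] (0:ℝ) ≤ 𝓝[≠] (0:ℝ) :=
      nhdsWithin_mono _ (fun x hx => ne_of_lt hx)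
    have hle2 : 𝓝[<] (0:ℝ) ≤ 𝓝 (0:ℝ) := nhdsWithin_le_nhds
    filter_upwards [hle1 hev1, hle2 hev2, hle2 hev3, hle2 hu', self_mem_nhdsWithin]
      with l h1 h2 h3 h4 hl0
    have hlne : l ≠ 0 := ne_of_lt hl0
    obtain ⟨hSu, hXu⟩ := h4
    set v : E := deriv φ l
    set w : E := u' l
    have hSv : fderiv ℝ S (φ l) v = deriv (S ∘ φ) l := (aux_deriv_comp S hS φ hφ l).symm
    have hXv : ∀ i, fderiv ℝ (X i) (φ l) v = deriv (X i ∘ φ) l := fun i =>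
      (aux_deriv_comp (X i) (hX i) φ hφ l).symm
    have hSH : fderiv ℝ S (φ l) (v - l • w) = 0 := by
      rw [map_sub, map_smul, smul_eq_mul, hSv, hSu]; ring
    have hXH : ∀ i, fderiv ℝ (X i) (φ l) (v - l • w) = 0 := fun i => by
      rw [map_sub, map_smul, smul_eq_mul, hXv i, hXu i]; ring
    have hMH : fderiv ℝ M (φ l) (v - l • w) = 0 := by
      rw [firstlaw_apply (hfl l) (v - l • w), hSH]
      simp [hXH]
    refine ⟨hMH, hSH, hXH, ?_⟩
    -- the bilinear form computation
    have hB1 := bform_deriv_identity M S X hM hS hX φ hφ T Y hT hY hfl l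
    have hBvH : Bform M S X (φ l) (T l) (fun i => Y i l) v (v - l • w) = 0 := by
      rw [hB1, hSH]
      simp [hXH]
    have hBvw : l * Bform M S X (φ l) (T l) (fun i => Y i l) v w = F l := by
      rw [hB1]
      simp only [hFdef]
      rw [mul_add, Finset.mul_sum, ← hSu]
      have : ∀ i : Fin p, l * (deriv (Y i) l * fderiv ℝ (X i) (φ l) w)
          = deriv (Y i) l * deriv (X i ∘ φ) l := fun i => by rw [← hXu i]; ring
      rw [Finset.sum_congr rfl fun i _ => this i]
      ring
    -- bilinearity in the left slot
    have hsubL : ∀ a b c : E, Bform M S X (φ l) (T l) (fun i => Y i l) (a - l • b) c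
        = Bform M S X (φ l) (T l) (fun i => Y i l) a c
          - l * Bform M S X (φ l) (T l) (fun i => Y i l) b c := by
      intro a b c
      simp only [Bform, D2_sub_left, D2_smul_left, mul_sub, Finset.mul_sum]
      rw [Finset.sum_sub_distrib]
      have : ∀ i : Fin p, Y i l * (l * D2 (X i) (φ l) b c) = l * (Y i l * D2 (X i) (φ l) b c) :=
        fun i => by ring
      rw [Finset.sum_congr rfl fun i _ => this i, ← Finset.mul_sum]
      ring
    have hsymmB : ∀ a b : E, Bform M S X (φ l) (T l) (fun i => Y i l) a b
        = Bform M S X (φ l) (T l) (fun i => Y i l) b a := by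
      intro a b
      rw [Bform, Bform, aux_symm M hM, aux_symm S hS]
      congr 1
      exact Finset.sum_congr rfl fun i _ => by rw [aux_symm (X i) (hX i)]
    have hkey : Bform M S X (φ l) (T l) (fun i => Y i l) (v - l • w) (v - l • w)
        = -F l + l^2 * G l := by
      rw [hsubL v w (v - l • w), hBvH, hsymmB w (v - l • w), hsubL v w w, hGdef]
      simp only
      rw [mul_sub, hBvw]
      ring
    rw [hkey]
    clear_value F σ' G C
    -- final estimate
    have hFl : σ'/2 * l < F l := by
      rw [div_lt_iff_of_neg hl0] at h1
      linarith
    have hGl : G l < C := lt_of_le_of_lt (le_abs_self _) h2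
    have habs : -l < (-σ'/4)/C := by rwa [abs_of_neg hl0] at h3
    have hlC : (-l) * C < -σ'/4 := by
      rw [← lt_div_iff₀ hC]
      exact habs
    have hsq : l^2 * G l < l^2 * C := by
      have hl2 : 0 < l^2 := by positivity
      exact (mul_lt_mul_iff_right₀ hl2).mpr hGl
    have e1 : l^2*C < (-l)*(-σ'/4) := by
      nlinarith [mul_lt_mul_of_pos_left hlC (neg_pos.mpr hl0)]
    have e2 : 0 < σ'*l := mul_pos_of_neg_of_neg hσ' hl0
    nlinarith [hFl, hsq, e1, e2]
  -- extract ε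
  rw [eventually_iff, mem_nhdsLT_iff_exists_Ioo_subset] at key
  obtain ⟨a, ha, hsub⟩ := key
  refine ⟨-a, by simpa using ha, fun l hl => hsub ?_⟩
  simpa using hl
end

section
/- (Key identity in the proof of the turning point theorem.) Let φ : ℝ → E be a C^∞ curve and T, Y_1, …, Y_p : ℝ → ℝ be C^∞ functions such that for every λ, φ(λ) satisfies the first law with temperature T(λ) and potentials Y_i(λ). Let ũ : ℝ → E be a map such that λ·DS_{φ(λ)}(ũ(λ)) = (S∘φ)′(λ) and λ·DX^i_{φ(λ)}(ũ(λ)) = (X^i∘φ)′(λ) for all i and all λ, and set û(λ) := φ′(λ) − λ·ũ(λ). Then for every λ, B_{φ(λ)}(û(λ), û(λ)) = −[T′(λ)·(S∘φ)′(λ) + Σ_{i=1}^p Y_i′(λ)·(X^i∘φ)′(λ)] + λ²·B_{φ(λ)}(ũ(λ), ũ(λ)). -/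
open Filter Topology

section Aux
variable {E : Type*} [NormedAddCommGroup E] [NormedSpace ℝ E]

lemma fderiv_smooth {f : E → ℝ} (hf : ContDiff ℝ (⊤ : ℕ∞) f) :
    ContDiff ℝ (⊤ : ℕ∞) (fderiv ℝ f) :=
  hf.fderiv_right (by simp)

lemma hasD2 {f : E → ℝ} (hf : ContDiff ℝ (⊤ : ℕ∞) f) {φ : ℝ → E}
    (hφ : ContDiff ℝ (⊤ : ℕ∞) φ) (v : E) (l : ℝ) :
    HasDerivAt (fun x => fderiv ℝ f (φ x) v) (D2 f (φ l) (deriv φ l) v) l := by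
  have h1 : HasDerivAt φ (deriv φ l) l := ((hφ.differentiable (by simp)) l).hasDerivAt
  have h2 : HasFDerivAt (fderiv ℝ f) (fderiv ℝ (fderiv ℝ f) (φ l)) (φ l) :=
    (((fderiv_smooth hf).differentiable (by simp)) (φ l)).hasFDerivAt
  have h3 := h2.comp_hasDerivAt l h1
  exact ((ContinuousLinearMap.apply ℝ ℝ v).hasFDerivAt.comp_hasDerivAt l h3)

lemma D2_symm {f : E → ℝ} (hf : ContDiff ℝ (⊤ : ℕ∞) f) (φ u v : E) :
    D2 f φ u v = D2 f φ v u :=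
  second_derivative_symmetric
    (fun y => ((hf.differentiable (by simp)) y).hasFDerivAt)
    ((((fderiv_smooth hf).differentiable (by simp)) φ).hasFDerivAt) u v

lemma D2_bilin {f : E → ℝ} (φ a b : E) (l : ℝ) :
    D2 f φ (a - l • b) (a - l • b)
      = D2 f φ a a - l * D2 f φ a b - l * D2 f φ b a + l ^ 2 * D2 f φ b b := by
  simp [D2, map_sub, map_smul]
  ring

lemma chain_deriv {f : E → ℝ} (hf : ContDiff ℝ (⊤ : ℕ∞) f) {φ : ℝ → E}
    (hφ : ContDiff ℝ (⊤ : ℕ∞) φ) (l : ℝ) :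
    deriv (f ∘ φ) l = fderiv ℝ f (φ l) (deriv φ l) := by
  have h1 : HasDerivAt φ (deriv φ l) l := ((hφ.differentiable (by simp)) l).hasDerivAt
  exact (((hf.differentiable (by simp)) (φ l)).hasFDerivAt.comp_hasDerivAt l h1).deriv

/-- Differentiated first law: `B(φ'(l), v) = T'(l)·DS(v) + ∑ Yᵢ'(l)·DXⁱ(v)`. -/
lemma diff_first_law {p : ℕ} (M S : E → ℝ) (X : Fin p → E → ℝ)
    (hM : ContDiff ℝ (⊤ : ℕ∞) M) (hS : ContDiff ℝ (⊤ : ℕ∞) S)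
    (hX : ∀ i, ContDiff ℝ (⊤ : ℕ∞) (X i))
    (φ : ℝ → E) (hφ : ContDiff ℝ (⊤ : ℕ∞) φ)
    (T : ℝ → ℝ) (Y : Fin p → ℝ → ℝ)
    (hT : ContDiff ℝ (⊤ : ℕ∞) T) (hY : ∀ i, ContDiff ℝ (⊤ : ℕ∞) (Y i))
    (hfl : ∀ l : ℝ, FirstLaw M S X (φ l) (T l) (fun i => Y i l))
    (l : ℝ) (v : E) :
    Bform M S X (φ l) (T l) (fun i => Y i l) (deriv φ l) v
      = deriv T l * fderiv ℝ S (φ l) v + ∑ i, deriv (Y i) l * fderiv ℝ (X i) (φ l) v := by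
  have hL : HasDerivAt (fun x => fderiv ℝ M (φ x) v) (D2 M (φ l) (deriv φ l) v) l :=
    hasD2 hM hφ v l
  have hTd : HasDerivAt T (deriv T l) l :=
    ((hT.differentiable (by simp)) l).hasDerivAt
  have hR : HasDerivAt
      (fun x => T x * fderiv ℝ S (φ x) v + ∑ i, Y i x * fderiv ℝ (X i) (φ x) v)
      ((deriv T l * fderiv ℝ S (φ l) v + T l * D2 S (φ l) (deriv φ l) v)
        + ∑ i, (deriv (Y i) l * fderiv ℝ (X i) (φ l) v
            + Y i l * D2 (X i) (φ l) (deriv φ l) v)) l := by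
    refine (hTd.mul (hasD2 hS hφ v l)).add (HasDerivAt.fun_sum fun i _ => ?_)
    exact ((((hY i).differentiable (by simp)) l).hasDerivAt).mul (hasD2 (hX i) hφ v l)
  have heq : (fun x => fderiv ℝ M (φ x) v)
      = fun x => T x * fderiv ℝ S (φ x) v + ∑ i, Y i x * fderiv ℝ (X i) (φ x) v := by
    funext x
    have := hfl x
    rw [FirstLaw] at this
    rw [this]
    simp [ContinuousLinearMap.sum_apply]
  rw [heq] at hL
  have := hL.unique hR
  rw [Bform, this]
  rw [Finset.sum_add_distrib]
  ring_nf

end Aux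

/-- Key identity in the proof of the turning point theorem: with
`û(λ) = φ′(λ) − λ·ũ(λ)` where `λ·DS(ũ(λ)) = (S∘φ)′(λ)` and `λ·DXⁱ(ũ(λ)) = (Xⁱ∘φ)′(λ)`,
one has `B(û,û) = −[T′·(S∘φ)′ + ∑ᵢ Yᵢ′·(Xⁱ∘φ)′] + λ²·B(ũ,ũ)` at every `λ`. -/
theorem turning_point_key_identity
    {E : Type*} [NormedAddCommGroup E] [NormedSpace ℝ E] [CompleteSpace E]
    {p : ℕ} (M S : E → ℝ) (X : Fin p → E → ℝ)
    (hM : ContDiff ℝ (⊤ : ℕ∞) M) (hS : ContDiff ℝ (⊤ : ℕ∞) S)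
    (hX : ∀ i, ContDiff ℝ (⊤ : ℕ∞) (X i))
    (φ : ℝ → E) (hφ : ContDiff ℝ (⊤ : ℕ∞) φ)
    (T : ℝ → ℝ) (Y : Fin p → ℝ → ℝ)
    (hT : ContDiff ℝ (⊤ : ℕ∞) T) (hY : ∀ i, ContDiff ℝ (⊤ : ℕ∞) (Y i))
    (hfl : ∀ l : ℝ, FirstLaw M S X (φ l) (T l) (fun i => Y i l))
    (u' : ℝ → E)
    (hu'S : ∀ l : ℝ, l * fderiv ℝ S (φ l) (u' l) = deriv (S ∘ φ) l)
    (hu'X : ∀ (l : ℝ) (i : Fin p), l * fderiv ℝ (X i) (φ l) (u' l) = deriv (X i ∘ φ) l) :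
    ∀ l : ℝ,
      Bform M S X (φ l) (T l) (fun i => Y i l)
        (deriv φ l - l • u' l) (deriv φ l - l • u' l) =
      -(deriv T l * deriv (S ∘ φ) l + ∑ i, deriv (Y i) l * deriv (X i ∘ φ) l)
        + l ^ 2 * Bform M S X (φ l) (T l) (fun i => Y i l) (u' l) (u' l) := by
  intro l
  set a := deriv φ l
  set b := u' l
  -- expand bilinearity
  have hexp : Bform M S X (φ l) (T l) (fun i => Y i l) (a - l • b) (a - l • b)
      = Bform M S X (φ l) (T l) (fun i => Y i l) a a
        - l * Bform M S X (φ l) (T l) (fun i => Y i l) a b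
        - l * Bform M S X (φ l) (T l) (fun i => Y i l) b a
        + l ^ 2 * Bform M S X (φ l) (T l) (fun i => Y i l) b b := by
    have h1 : ∀ (f : E → ℝ) (c : ℝ),
        c * D2 f (φ l) (a - l • b) (a - l • b)
          = c * D2 f (φ l) a a - l * (c * D2 f (φ l) a b)
            - l * (c * D2 f (φ l) b a) + l ^ 2 * (c * D2 f (φ l) b b) := by
      intro f c; rw [D2_bilin]; ring
    simp only [Bform]
    rw [D2_bilin, D2_bilin,
      Finset.sum_congr rfl (fun i _ => h1 (X i) (Y i l))]
    simp only [Finset.sum_add_distrib, Finset.sum_sub_distrib, ← Finset.mul_sum]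
    ring
  have hsymm : Bform M S X (φ l) (T l) (fun i => Y i l) b a
      = Bform M S X (φ l) (T l) (fun i => Y i l) a b := by
    rw [Bform, Bform, D2_symm hM, D2_symm hS]
    rw [Finset.sum_congr rfl fun i _ => by rw [D2_symm (hX i)]]
  have hstar := diff_first_law M S X hM hS hX φ hφ T Y hT hY hfl l
  have haa : Bform M S X (φ l) (T l) (fun i => Y i l) a a
      = deriv T l * deriv (S ∘ φ) l + ∑ i, deriv (Y i) l * deriv (X i ∘ φ) l := by
    rw [hstar a, chain_deriv hS hφ]
    congr 1
    exact Finset.sum_congr rfl fun i _ => by rw [chain_deriv (hX i) hφ]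
  have hab : l * Bform M S X (φ l) (T l) (fun i => Y i l) a b
      = deriv T l * deriv (S ∘ φ) l + ∑ i, deriv (Y i) l * deriv (X i ∘ φ) l := by
    rw [hstar b, ← hu'S l]
    simp only [← hu'X l]
    rw [mul_add, Finset.mul_sum]
    congr 1
    · ring
    · exact Finset.sum_congr rfl fun i _ => by ring
  rw [hexp, hsymm, haa]
  linarith [hab]
end
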